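/- Let 𝒯 be a triangle family with |𝒯| = t > 0 and λ(𝒯) > 2, and let v and e denote respectively the number of vertices and the number of edges of the support graph Γ₀(𝒯). Then v ≤ 2e/(⌈λ(𝒯)⌉ − 1), e ≤ 3t/(⌈λ(𝒯)⌉ − 2), and v ≤ 6t/((⌈λ(𝒯)⌉ − 1)(⌈λ(𝒯)⌉ − 2)). -/

import Mathlib

open Finset Matrix

/-- The sign `[T : e]` of an edge `e` in a triangle `T`. -/
noncomputable def triSign (T e : Finset ℕ) : ℝ :=
  if e ⊆ T ∧ e.card = 2 ∧ T.card = 3 then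
    if (T \ e).max = T.max ∨ (T \ e).min = T.min then 1 else -1
  else 0

/-- A triangle family: a nonempty finite set of 3-element subsets of ℕ. -/
def IsTriFam (F : Finset (Finset ℕ)) : Prop :=
  F.Nonempty ∧ ∀ T ∈ F, T.card = 3

/-- The edges of the support graph of a triangle family. -/
def edgesOf (F : Finset (Finset ℕ)) : Finset (Finset ℕ) :=
  F.biUnion fun T => T.powersetCard 2

/-- The vertices of the support graph of a triangle family. -/
def vertsOf (F : Finset (Finset ℕ)) : Finset ℕ :=
  F.biUnion id

/-- The signed edge-triangle incidence matrix of a triangle family. -/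
noncomputable def delta1 (F : Finset (Finset ℕ)) :
    Matrix {T // T ∈ F} {e // e ∈ edgesOf F} ℝ :=
  Matrix.of fun T e => triSign T.1 e.1

/-- The smallest positive eigenvalue of a matrix. -/
noncomputable def lambdaMinPos {m : Type*} [Fintype m] (M : Matrix m m ℝ) : ℝ :=
  sInf {μ : ℝ | 0 < μ ∧ ∃ v : m → ℝ, v ≠ 0 ∧ M.mulVec v = μ • v}

/-- `λ(𝒯)`: the smallest positive eigenvalue of `δ₁(𝒯)ᵀ δ₁(𝒯)`. -/
noncomputable def lam (F : Finset (Finset ℕ)) : ℝ :=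
  lambdaMinPos ((delta1 F)ᵀ * delta1 F)

/-- The neighborhood of `x` in the support graph `Γ₀(F)`. -/
def nbrs (F : Finset (Finset ℕ)) (x : ℕ) : Finset ℕ :=
  (vertsOf F).filter fun y => x ≠ y ∧ ∃ T ∈ F, x ∈ T ∧ y ∈ T

/-- `φ(t)`: the maximum of `λ(𝒯)` over triangle families with `|𝒯| = t`. -/
noncomputable def phi (t : ℕ) : ℝ :=
  sSup {r : ℝ | ∃ F : Finset (Finset ℕ), IsTriFam F ∧ F.card = t ∧ lam F = r}

/-- `Λ(t) = max_{1 ≤ s ≤ t} φ(s)`. -/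
noncomputable def Lam (t : ℕ) : ℝ :=
  sSup {r : ℝ | ∃ s : ℕ, 1 ≤ s ∧ s ≤ t ∧ phi s = r}

/-- `H(n) = min{ s ≥ 1 : φ(C(n,3)+s) > n - 1 }`. -/
noncomputable def Hfun (n : ℕ) : ℕ :=
  sInf {s : ℕ | 1 ≤ s ∧ (n : ℝ) - 1 < phi (n.choose 3 + s)}

/-- The triangle family `𝒯_{c,b}`: all 3-cliques of `K_c ∨ (b isolated vertices)`. -/
def Tcb (c b : ℕ) : Finset (Finset ℕ) :=
  ((Finset.Icc 1 c).powersetCard 3) ∪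
    (Finset.Icc (c+1) (c+b)).biUnion
      (fun i => ((Finset.Icc 1 c).powersetCard 2).image (fun p => insert i p))

section prev
variable {F : Finset (Finset ℕ)}

lemma triSign_eq_zero {T e : Finset ℕ} (h : ¬(e ⊆ T ∧ e.card = 2 ∧ T.card = 3)) :
    triSign T e = 0 := by
  rw [triSign, if_neg h]

lemma triSign_sq {T e : Finset ℕ} (h1 : e ⊆ T) (h2 : e.card = 2) (h3 : T.card = 3) :
    triSign T e * triSign T e = 1 := by
  rw [triSign, if_pos ⟨h1, h2, h3⟩]
  split <;> norm_num

lemma triSign_abs_le (T e : Finset ℕ) : |triSign T e| ≤ 1 := by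
  rw [triSign]
  split
  · split <;> norm_num
  · norm_num

lemma mem_edgesOf {e : Finset ℕ} :
    e ∈ edgesOf F ↔ ∃ T ∈ F, e ⊆ T ∧ e.card = 2 := by
  simp [edgesOf, Finset.mem_powersetCard]

lemma card_of_mem_edgesOf {e : Finset ℕ} (h : e ∈ edgesOf F) : e.card = 2 := by
  obtain ⟨T, _, _, hc⟩ := mem_edgesOf.mp h
  exact hc

lemma edgesOf_filter {T : Finset ℕ} (hT : T ∈ F) :
    (edgesOf F).filter (fun f => f ⊆ T) = T.powersetCard 2 := by
  ext f
  simp only [Finset.mem_filter, Finset.mem_powersetCard, mem_edgesOf]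
  constructor
  · rintro ⟨⟨T', _, _, hc⟩, hsub⟩
    exact ⟨hsub, hc⟩
  · rintro ⟨hsub, hc⟩
    exact ⟨⟨T, hT, hsub, hc⟩, hsub⟩

lemma edge_subset_verts {f : Finset ℕ} (hf : f ∈ edgesOf F) : f ⊆ vertsOf F := by
  obtain ⟨T, hT, hsub, _⟩ := mem_edgesOf.mp hf
  intro x hx
  exact Finset.mem_biUnion.mpr ⟨T, hT, hsub hx⟩

lemma sum_edge_deg (hF : ∀ T ∈ F, T.card = 3) :
    ∑ e ∈ edgesOf F, ((F.filter fun T => e ⊆ T).card) = 3 * F.card := by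
  classical
  simp only [Finset.card_filter]
  rw [Finset.sum_comm]
  rw [Finset.sum_congr rfl fun T hT => ?_, Finset.sum_const, smul_eq_mul, mul_comm]
  have h1 : ∑ e ∈ edgesOf F, ite (e ⊆ T) 1 0 = ((edgesOf F).filter fun f => f ⊆ T).card := by
    rw [Finset.card_filter]
  rw [h1, edgesOf_filter hT, Finset.card_powersetCard, hF T hT]
  decide

lemma sum_vert_deg (F : Finset (Finset ℕ)) :
    ∑ x ∈ vertsOf F, (((edgesOf F).filter fun f => x ∈ f).card) = 2 * (edgesOf F).card := by
  classical
  simp only [Finset.card_filter]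
  rw [Finset.sum_comm]
  rw [Finset.sum_congr rfl fun f hf => ?_, Finset.sum_const, smul_eq_mul, mul_comm]
  have h1 : ∑ x ∈ vertsOf F, ite (x ∈ f) 1 0 = ((vertsOf F).filter fun x => x ∈ f).card := by
    rw [Finset.card_filter]
  rw [h1]
  have h2 : (vertsOf F).filter (fun x => x ∈ f) = f := by
    ext x
    simp only [Finset.mem_filter]
    exact ⟨fun h => h.2, fun h => ⟨edge_subset_verts hf h, h⟩⟩
  rw [h2, card_of_mem_edgesOf hf]

end prev

lemma sum_dot {n : Type*} [Fintype n] (b : OrthonormalBasis n ℝ (EuclideanSpace ℝ n))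
    (x y : n → ℝ) :
    ∑ i, dotProduct x (b i) * dotProduct (b i) y = dotProduct x y := by
  have h := b.sum_inner_mul_inner (WithLp.toLp 2 x : EuclideanSpace ℝ n) (WithLp.toLp 2 y : EuclideanSpace ℝ n)
  have e : ∀ u v : EuclideanSpace ℝ n, (inner ℝ u v : ℝ) = dotProduct (u : n → ℝ) (v : n → ℝ) := by
    intro u v
    simp [PiLp.inner_apply, dotProduct, mul_comm]
  simp only [e] at h
  exact h

lemma exists_eigen_le {n : Type*} [Fintype n] [DecidableEq n]
    (B : Matrix n n ℝ) (hB : B.IsHermitian)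
    (hPSD : ∀ w : n → ℝ, 0 ≤ dotProduct w (B *ᵥ w))
    (y : n → ℝ) (hy : y ≠ 0)
    (hker : ∀ w : n → ℝ, B *ᵥ w = 0 → dotProduct y w = 0)
    (C : ℝ)
    (hRay : dotProduct y (B *ᵥ y) ≤ C * dotProduct y y) :
    ∃ μ : ℝ, 0 < μ ∧ μ ≤ C ∧ ∃ v : n → ℝ, v ≠ 0 ∧ B *ᵥ v = μ • v := by
  classical
  set b := hB.eigenvectorBasis with hbdef
  set μ := hB.eigenvalues with hμdef
  have hBT : Bᵀ = B := by
    ext i j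
    have h2 := congr_fun (congr_fun hB i) j
    rw [Matrix.conjTranspose_apply] at h2
    simpa using h2
  have hsym : ∀ x z : n → ℝ, dotProduct x (B *ᵥ z) = dotProduct (B *ᵥ x) z := by
    intro x z
    rw [dotProduct_mulVec, ← mulVec_transpose, hBT]
  let bv : n → (n → ℝ) := fun i => (b i : n → ℝ)
  have hmul : ∀ i, B *ᵥ bv i = μ i • bv i := fun i => hB.mulVec_eigenvectorBasis i
  have hbv : ∀ i, bv i ≠ 0 := by
    intro i h0
    exact b.orthonormal.ne_zero i (by ext j; exact congr_fun h0 j)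
  set c : n → ℝ := fun i => dotProduct y (bv i) with hcdef
  have hyy : dotProduct y y = ∑ i, c i * c i := by
    rw [← sum_dot b y y]
    exact Finset.sum_congr rfl fun i _ => by rw [dotProduct_comm (bv i) y]
  have hyBy : dotProduct y (B *ᵥ y) = ∑ i, μ i * (c i * c i) := by
    rw [dotProduct_comm, ← sum_dot b (B *ᵥ y) y]
    apply Finset.sum_congr rfl
    intro i _
    rw [dotProduct_comm (B *ᵥ y) (bv i), hsym (bv i) y, hmul i, smul_dotProduct,
      dotProduct_comm (bv i) y]
    simp only [hcdef, smul_eq_mul]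
    ring
  have hyne : dotProduct y y ≠ 0 := fun h => hy (dotProduct_self_eq_zero.mp h)
  have hex : ∃ i, c i ≠ 0 := by
    by_contra h
    push_neg at h
    exact hyne (by rw [hyy]; exact Finset.sum_eq_zero fun i _ => by rw [h i, mul_zero])
  have hμpos : ∀ i, c i ≠ 0 → 0 < μ i := by
    intro i hci
    have hnn : 0 ≤ μ i := by
      have h1 := hPSD (bv i)
      rw [hmul i, dotProduct_smul, smul_eq_mul] at h1
      have h3 : 0 < dotProduct (bv i) (bv i) := by
        have h4 : (0:ℝ) ≤ dotProduct (bv i) (bv i) :=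
          Finset.sum_nonneg fun j _ => mul_self_nonneg _
        rcases h4.lt_or_eq with h | h
        · exact h
        · exact absurd (dotProduct_self_eq_zero.mp h.symm) (hbv i)
      nlinarith
    rcases hnn.lt_or_eq with h | h
    · exact h
    · exfalso
      apply hci
      have h0 : B *ᵥ bv i = 0 := by rw [hmul i, ← h, zero_smul]
      exact hker _ h0
  by_contra hcon
  push_neg at hcon
  have hstrict : C * dotProduct y y < dotProduct y (B *ᵥ y) := by
    rw [hyy, hyBy, Finset.mul_sum]
    obtain ⟨i0, hi0⟩ := hex
    apply Finset.sum_lt_sum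
    · intro i _
      by_cases hci : c i = 0
      · simp [hci]
      · have h1 := hμpos i hci
        have h2 : C < μ i := by
          by_contra hle
          push_neg at hle
          exact hcon (μ i) h1 hle (bv i) (hbv i) (hmul i)
        nlinarith [mul_self_pos.mpr hci]
    · refine ⟨i0, Finset.mem_univ i0, ?_⟩
      have h1 := hμpos i0 hi0
      have h2 : C < μ i0 := by
        by_contra hle
        push_neg at hle
        exact hcon (μ i0) h1 hle (bv i0) (hbv i0) (hmul i0)
      nlinarith [mul_self_pos.mpr hi0]
  linarith

lemma sum_subtype_F {α β : Type*} [AddCommMonoid β] (s : Finset α) (g : α → β) :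
    ∑ i : {x // x ∈ s}, g i.1 = ∑ i ∈ s, g i := by
  rw [← Finset.sum_attach s g]
  exact Finset.sum_congr (Finset.univ_eq_attach s) (fun _ _ => rfl)

section main
variable {F : Finset (Finset ℕ)}

/-- the off-diagonal pair count is at most 1 -/
lemma pair_card_le_one (hF : ∀ T ∈ F, T.card = 3) {e f : Finset ℕ}
    (he2 : e.card = 2) (hf2 : f.card = 2) (hne : f ≠ e) :
    (F.filter fun T => e ⊆ T ∧ f ⊆ T).card ≤ 1 := by
  classical
  apply Finset.card_le_one.mpr
  intro T1 h1 T2 h2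
  simp only [Finset.mem_filter] at h1 h2
  obtain ⟨x, hxf, hxe⟩ : ∃ x, x ∈ f ∧ x ∉ e := by
    by_contra h
    push_neg at h
    exact hne (Finset.eq_of_subset_of_card_le h (by rw [he2, hf2]))
  have key : ∀ T, T ∈ F → e ⊆ T → f ⊆ T → T = e ∪ f := by
    intro T hT heT hfT
    have hsub : e ∪ f ⊆ T := Finset.union_subset heT hfT
    have h3 : 3 ≤ (e ∪ f).card := by
      have : insert x e ⊆ e ∪ f := by
        intro y hy
        rcases Finset.mem_insert.mp hy with rfl | hy
        · exact Finset.mem_union_right _ hxf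
        · exact Finset.mem_union_left _ hy
      calc 3 = (insert x e).card := by rw [Finset.card_insert_of_notMem hxe, he2]
      _ ≤ (e ∪ f).card := Finset.card_le_card this
    exact (Finset.eq_of_subset_of_card_le hsub (by rw [hF T hT]; exact h3)).symm
  rw [key T1 h1.1 h1.2.1 h1.2.2, key T2 h2.1 h2.2.1 h2.2.2]

lemma offdiag_sum (hF : ∀ T ∈ F, T.card = 3) {e : Finset ℕ}
    (he : e ∈ edgesOf F) :
    ∑ f ∈ (edgesOf F).erase e, (F.filter fun T => e ⊆ T ∧ f ⊆ T).card
      = 2 * (F.filter fun T => e ⊆ T).card := by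
  classical
  have he2 := card_of_mem_edgesOf he
  simp only [Finset.card_filter]
  rw [Finset.sum_comm]
  have hinner : ∀ T ∈ F,
      (∑ f ∈ (edgesOf F).erase e, if e ⊆ T ∧ f ⊆ T then 1 else 0)
        = if e ⊆ T then 2 else 0 := by
    intro T hT
    by_cases heT : e ⊆ T
    · rw [if_pos heT]
      have h1 : ∀ f, (if e ⊆ T ∧ f ⊆ T then 1 else 0) = if f ⊆ T then 1 else 0 := by
        intro f
        by_cases h : f ⊆ T <;> simp [h, heT]
      simp only [h1]
      have h2 : (∑ f ∈ (edgesOf F).erase e, if f ⊆ T then 1 else 0)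
          = (((edgesOf F).erase e).filter fun f => f ⊆ T).card := by
        rw [Finset.card_filter]
      rw [h2, Finset.filter_erase, edgesOf_filter hT, Finset.card_erase_of_mem
        (Finset.mem_powersetCard.mpr ⟨heT, he2⟩), Finset.card_powersetCard, hF T hT]
      decide
    · rw [if_neg heT]
      apply Finset.sum_eq_zero
      intro f _
      rw [if_neg (fun h => heT h.1)]
  rw [Finset.sum_congr rfl hinner, Finset.sum_ite, Finset.sum_const, Finset.sum_const]
  simp [Finset.filter_filter, mul_comm]

/-- the key spectral bound: `lam F ≤ deg(e) + 2` for every edge `e`. -/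
lemma lam_le_deg (hF : IsTriFam F) {e : Finset ℕ} (he : e ∈ edgesOf F) :
    lam F ≤ ((F.filter fun T => e ⊆ T).card : ℝ) + 2 := by
  classical
  obtain ⟨hFne, hF3⟩ := hF
  have he2 := card_of_mem_edgesOf he
  obtain ⟨T0, hT0, heT0, _⟩ := mem_edgesOf.mp he
  set d : ℕ := (F.filter fun T => e ⊆ T).card with hd
  set δ := delta1 F with hδ
  set B := δ * δᵀ with hB
  set y : {T // T ∈ F} → ℝ := fun T => triSign T.1 e with hy
  -- B is symmetric
  have hherm : B.IsHermitian := by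
    ext i j
    simp only [hB, Matrix.conjTranspose_apply, Matrix.mul_apply, Matrix.transpose_apply,
      star_trivial]
    exact Finset.sum_congr rfl fun k _ => mul_comm _ _
  -- quadratic form identity
  have hquad : ∀ w : {T // T ∈ F} → ℝ,
      dotProduct w (B *ᵥ w) = dotProduct (δᵀ *ᵥ w) (δᵀ *ᵥ w) := by
    intro w
    rw [hB, ← Matrix.mulVec_mulVec, dotProduct_mulVec, ← mulVec_transpose]
  have hPSD : ∀ w : {T // T ∈ F} → ℝ, 0 ≤ dotProduct w (B *ᵥ w) := by
    intro w
    rw [hquad]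
    exact Finset.sum_nonneg fun j _ => mul_self_nonneg _
  -- y is nonzero
  have hyne : y ≠ 0 := by
    intro h0
    have h1 := congr_fun h0 ⟨T0, hT0⟩
    have h2 := triSign_sq heT0 he2 (hF3 T0 hT0)
    simp only [hy, Pi.zero_apply] at h1
    rw [h1] at h2
    norm_num at h2
  -- y is orthogonal to the kernel
  have hker : ∀ w : {T // T ∈ F} → ℝ, B *ᵥ w = 0 → dotProduct y w = 0 := by
    intro w hw
    have h1 : dotProduct (δᵀ *ᵥ w) (δᵀ *ᵥ w) = 0 := by
      rw [← hquad, hw, dotProduct_zero]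
    have h2 : δᵀ *ᵥ w = 0 := dotProduct_self_eq_zero.mp h1
    have h3 := congr_fun h2 ⟨e, he⟩
    simpa [Matrix.mulVec, dotProduct, Matrix.transpose_apply, hδ, delta1, hy] using h3
  -- |y|^2 = d
  have hyy : dotProduct y y = (d : ℝ) := by
    have h := sum_subtype_F F (fun T => triSign T e * triSign T e)
    have h2 : ∑ T ∈ F, triSign T e * triSign T e = (d : ℝ) := by
      rw [hd, Finset.card_filter]
      push_cast
      apply Finset.sum_congr rfl
      intro T hT
      by_cases hsub : e ⊆ T
      · rw [triSign_sq hsub he2 (hF3 T hT), if_pos hsub]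
      · rw [triSign_eq_zero (fun hc => hsub hc.1), mul_zero, if_neg hsub]
    exact h.trans h2
  -- entries of δᵀ y
  set U : Finset ℕ → ℝ := fun f => ∑ T ∈ F, triSign T f * triSign T e with hU
  have hUe : ∀ f (hf : f ∈ edgesOf F), (δᵀ *ᵥ y) ⟨f, hf⟩ = U f := by
    intro f hf
    exact sum_subtype_F F (fun T => triSign T f * triSign T e)
  have hUee : U e = (d : ℝ) := by
    rw [hU, hd, Finset.card_filter]
    push_cast
    apply Finset.sum_congr rfl
    intro T hT
    by_cases h : e ⊆ T
    · rw [triSign_sq h he2 (hF3 T hT), if_pos h]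
    · rw [triSign_eq_zero (fun hc => h hc.1), mul_zero, if_neg h]
  -- Rayleigh bound
  have hRay : dotProduct y (B *ᵥ y) ≤ ((d : ℝ) + 2) * dotProduct y y := by
    rw [hquad, hyy]
    have hdot : dotProduct (δᵀ *ᵥ y) (δᵀ *ᵥ y) = ∑ f ∈ edgesOf F, U f * U f := by
      rw [← sum_subtype_F (edgesOf F) (fun f => U f * U f)]
      refine Finset.sum_congr rfl fun f _ => ?_
      rw [← hUe f.1 f.2]
    rw [hdot, ← Finset.add_sum_erase _ _ he, hUee]
    have hbound : ∑ f ∈ (edgesOf F).erase e, U f * U f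
        ≤ ∑ f ∈ (edgesOf F).erase e, ((F.filter fun T => e ⊆ T ∧ f ⊆ T).card : ℝ) := by
      apply Finset.sum_le_sum
      intro f hf
      have hfE := Finset.mem_of_mem_erase hf
      have hfne : f ≠ e := Finset.ne_of_mem_erase hf
      have hf2 := card_of_mem_edgesOf hfE
      have habs : |U f| ≤ ((F.filter fun T => e ⊆ T ∧ f ⊆ T).card : ℝ) := by
        rw [hU]
        calc |∑ T ∈ F, triSign T f * triSign T e| ≤ ∑ T ∈ F, |triSign T f * triSign T e| :=
              Finset.abs_sum_le_sum_abs _ _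
        _ ≤ ∑ T ∈ F, if e ⊆ T ∧ f ⊆ T then 1 else 0 := by
            apply Finset.sum_le_sum
            intro T hT
            by_cases h : e ⊆ T ∧ f ⊆ T
            · rw [if_pos h, abs_mul]
              calc |triSign T f| * |triSign T e| ≤ 1 * 1 :=
                    mul_le_mul (triSign_abs_le T f) (triSign_abs_le T e)
                      (abs_nonneg _) zero_le_one
              _ = 1 := one_mul 1
            · rw [if_neg h]
              rcases not_and_or.mp h with h | h
              · rw [triSign_eq_zero (fun hc => h hc.1), mul_zero, abs_zero]
              · rw [triSign_eq_zero (fun hc => h hc.1), zero_mul, abs_zero]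
        _ = ((F.filter fun T => e ⊆ T ∧ f ⊆ T).card : ℝ) := by
            rw [Finset.card_filter]; push_cast; rfl
      have hcle : ((F.filter fun T => e ⊆ T ∧ f ⊆ T).card : ℝ) ≤ 1 := by
        exact_mod_cast pair_card_le_one hF3 he2 hf2 hfne
      nlinarith [abs_nonneg (U f), abs_mul_abs_self (U f)]
    have hsum2 : ∑ f ∈ (edgesOf F).erase e, ((F.filter fun T => e ⊆ T ∧ f ⊆ T).card : ℝ)
        = 2 * (d : ℝ) := by
      rw [← Nat.cast_sum]
      rw [offdiag_sum hF3 he]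
      push_cast
      ring
    nlinarith [hbound, hsum2]
  -- apply the spectral lemma
  obtain ⟨μ, hμpos, hμle, v, hvne, hvec⟩ :=
    exists_eigen_le B hherm hPSD y hyne hker ((d : ℝ) + 2) hRay
  -- transfer eigenvalue to δᵀδ
  set w : {f // f ∈ edgesOf F} → ℝ := δᵀ *ᵥ v with hw
  have hwvec : (δᵀ * δ) *ᵥ w = μ • w := by
    rw [hw, Matrix.mulVec_mulVec, Matrix.mul_assoc, ← hB, ← Matrix.mulVec_mulVec, hvec,
      Matrix.mulVec_smul]
  have hwne : w ≠ 0 := by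
    intro h0
    have h1 : B *ᵥ v = 0 := by
      rw [hB, ← Matrix.mulVec_mulVec, ← hw, h0, Matrix.mulVec_zero]
    rw [hvec] at h1
    rcases smul_eq_zero.mp h1 with h | h
    · exact absurd h (ne_of_gt hμpos)
    · exact hvne h
  have hmem : μ ∈ {μ : ℝ | 0 < μ ∧ ∃ v : {f // f ∈ edgesOf F} → ℝ, v ≠ 0 ∧
      ((delta1 F)ᵀ * delta1 F).mulVec v = μ • v} := ⟨hμpos, w, hwne, hwvec⟩
  have hbdd : BddBelow {μ : ℝ | 0 < μ ∧ ∃ v : {f // f ∈ edgesOf F} → ℝ, v ≠ 0 ∧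
      ((delta1 F)ᵀ * delta1 F).mulVec v = μ • v} := ⟨0, fun x hx => le_of_lt hx.1⟩
  calc lam F ≤ μ := csInf_le hbdd hmem
  _ ≤ (d : ℝ) + 2 := hμle

end main

lemma vert_deg_lower (hF : IsTriFam F) {x : ℕ} (hx : x ∈ vertsOf F) :
    ∃ e ∈ edgesOf F, x ∈ e ∧
      (F.filter fun T => e ⊆ T).card + 1 ≤ ((edgesOf F).filter fun f => x ∈ f).card := by
  classical
  obtain ⟨T0, hT0, hxT0⟩ := Finset.mem_biUnion.mp hx
  simp only [id] at hxT0
  have hT03 : T0.card = 3 := hF.2 T0 hT0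
  have hne : (T0.erase x).Nonempty := by
    rw [← Finset.card_pos, Finset.card_erase_of_mem hxT0, hT03]
    norm_num
  obtain ⟨b, hb⟩ := hne
  have hbx : b ≠ x := Finset.ne_of_mem_erase hb
  have hbT0 : b ∈ T0 := Finset.mem_of_mem_erase hb
  set e : Finset ℕ := insert x {b} with hedef
  have hxe : x ∈ e := Finset.mem_insert_self _ _
  have he2 : e.card = 2 := by
    rw [hedef, Finset.card_insert_of_notMem (by simp [hbx.symm]), Finset.card_singleton]
  have heT0 : e ⊆ T0 := by
    rw [hedef]
    exact Finset.insert_subset hxT0 (Finset.singleton_subset_iff.mpr hbT0)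
  have he : e ∈ edgesOf F := mem_edgesOf.mpr ⟨T0, hT0, heT0, he2⟩
  refine ⟨e, he, hxe, ?_⟩
  set D := ((edgesOf F).filter fun f => x ∈ f) with hD
  have heD : e ∈ D := Finset.mem_filter.mpr ⟨he, hxe⟩
  have hDpos : 1 ≤ D.card := Finset.card_pos.mpr ⟨e, heD⟩
  have hinj : (F.filter fun T => e ⊆ T).card ≤ (D.erase e).card := by
    apply Finset.card_le_card_of_injOn (fun T => insert x (T \ e))
    · intro T hT
      rw [Finset.mem_coe, Finset.mem_filter] at hT
      obtain ⟨hTF, heT⟩ := hT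
      have hT3 := hF.2 T hTF
      have hcsd : (T \ e).card = 1 := by
        rw [Finset.card_sdiff_of_subset heT, hT3, he2]
      have hxsd : x ∉ T \ e := fun h => (Finset.mem_sdiff.mp h).2 hxe
      have hcard : (insert x (T \ e)).card = 2 := by
        rw [Finset.card_insert_of_notMem hxsd, hcsd]
      have hsub : insert x (T \ e) ⊆ T :=
        Finset.insert_subset (heT hxe) (Finset.sdiff_subset)
      have hmemE : insert x (T \ e) ∈ edgesOf F := mem_edgesOf.mpr ⟨T, hTF, hsub, hcard⟩
      apply Finset.mem_erase.mpr
      constructor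
      · obtain ⟨c, hc⟩ := Finset.card_pos.mp (by rw [hcsd]; norm_num : 0 < (T \ e).card)
        intro hcon
        have hce : c ∈ e := hcon ▸ Finset.mem_insert_of_mem hc
        exact (Finset.mem_sdiff.mp hc).2 hce
      · exact Finset.mem_filter.mpr ⟨hmemE, Finset.mem_insert_self _ _⟩
    · intro T1 h1 T2 h2 heq
      rw [Finset.mem_coe, Finset.mem_filter] at h1 h2
      have hx1 : x ∉ T1 \ e := fun h => (Finset.mem_sdiff.mp h).2 hxe
      have hx2 : x ∉ T2 \ e := fun h => (Finset.mem_sdiff.mp h).2 hxe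
      have hsd : T1 \ e = T2 \ e := by
        have := congrArg (fun s => Finset.erase s x) heq
        simpa [Finset.erase_insert hx1, Finset.erase_insert hx2] using this
      calc T1 = e ∪ (T1 \ e) := (Finset.union_sdiff_of_subset h1.2).symm
      _ = e ∪ (T2 \ e) := by rw [hsd]
      _ = T2 := Finset.union_sdiff_of_subset h2.2
  have hcd : (D.erase e).card = D.card - 1 := Finset.card_erase_of_mem heD
  omega



/-- Counting lemma: if `|𝒯| = t > 0` and `λ(𝒯) > 2`, then with `v` and `e` the number
of vertices and edges of `Γ₀(𝒯)`, one has `v ≤ 2e/(⌈λ⌉-1)`, `e ≤ 3t/(⌈λ⌉-2)` and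
`v ≤ 6t/((⌈λ⌉-1)(⌈λ⌉-2))`. -/
theorem stmt4 (F : Finset (Finset ℕ)) (hF : IsTriFam F) (t : ℕ) (hcard : F.card = t)
    (ht : 0 < t) (hlam : 2 < lam F) :
    ((vertsOf F).card : ℝ) ≤ 2 * (edgesOf F).card / ((⌈lam F⌉ : ℝ) - 1) ∧
    ((edgesOf F).card : ℝ) ≤ 3 * t / ((⌈lam F⌉ : ℝ) - 2) ∧
    ((vertsOf F).card : ℝ) ≤ 6 * t / (((⌈lam F⌉ : ℝ) - 1) * ((⌈lam F⌉ : ℝ) - 2)) := by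
  classical
  set L : ℝ := (⌈lam F⌉ : ℝ) with hL
  have hL3 : (3 : ℝ) ≤ L := by
    have : (2 : ℤ) < ⌈lam F⌉ := Int.lt_ceil.mpr (by exact_mod_cast hlam)
    rw [hL]
    exact_mod_cast this
  -- edge degrees are at least L - 2
  have hdeg : ∀ e ∈ edgesOf F, L - 2 ≤ ((F.filter fun T => e ⊆ T).card : ℝ) := by
    intro e he
    have h1 := lam_le_deg hF he
    have h2 : ⌈lam F⌉ ≤ ((F.filter fun T => e ⊆ T).card : ℤ) + 2 :=
      Int.ceil_le.mpr (by push_cast; linarith)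
    have h3 : L ≤ ((F.filter fun T => e ⊆ T).card : ℝ) + 2 := by
      rw [hL]; exact_mod_cast h2
    linarith
  -- edge inequality
  have hE : ((edgesOf F).card : ℝ) * (L - 2) ≤ 3 * t := by
    calc ((edgesOf F).card : ℝ) * (L - 2) = ∑ _e ∈ edgesOf F, (L - 2) := by
          rw [Finset.sum_const, nsmul_eq_mul, mul_comm]
    _ ≤ ∑ e ∈ edgesOf F, ((F.filter fun T => e ⊆ T).card : ℝ) :=
          Finset.sum_le_sum hdeg
    _ = ((∑ e ∈ edgesOf F, (F.filter fun T => e ⊆ T).card : ℕ) : ℝ) := by push_cast; rfl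
    _ = 3 * t := by rw [sum_edge_deg hF.2, hcard]; push_cast; ring
  -- vertex inequality
  have hV : ((vertsOf F).card : ℝ) * (L - 1) ≤ 2 * (edgesOf F).card := by
    have hvd : ∀ x ∈ vertsOf F,
        L - 1 ≤ (((edgesOf F).filter fun f => x ∈ f).card : ℝ) := by
      intro x hx
      obtain ⟨e, he, _, hle⟩ := vert_deg_lower hF hx
      have h1 := hdeg e he
      have h2 : ((F.filter fun T => e ⊆ T).card : ℝ) + 1
          ≤ (((edgesOf F).filter fun f => x ∈ f).card : ℝ) := by exact_mod_cast hle
      linarith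
    calc ((vertsOf F).card : ℝ) * (L - 1) = ∑ _x ∈ vertsOf F, (L - 1) := by
          rw [Finset.sum_const, nsmul_eq_mul, mul_comm]
    _ ≤ ∑ x ∈ vertsOf F, (((edgesOf F).filter fun f => x ∈ f).card : ℝ) :=
          Finset.sum_le_sum hvd
    _ = ((∑ x ∈ vertsOf F, ((edgesOf F).filter fun f => x ∈ f).card : ℕ) : ℝ) := by
          push_cast; rfl
    _ = 2 * (edgesOf F).card := by rw [sum_vert_deg F]; push_cast; ring
  have h1pos : (0 : ℝ) < L - 1 := by linarith
  have h2pos : (0 : ℝ) < L - 2 := by linarith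
  refine ⟨?_, ?_, ?_⟩
  · rw [le_div_iff₀ h1pos]
    linarith
  · rw [le_div_iff₀ h2pos]
    linarith
  · rw [le_div_iff₀ (mul_pos h1pos h2pos)]
    nlinarith [mul_le_mul_of_nonneg_right hV (le_of_lt h2pos),
      (by positivity : (0:ℝ) ≤ ((edgesOf F).card : ℝ))]
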